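/- For any language L ⊆ A* and a fresh letter c ∉ A, the suffix extension L' = L{c}(A ∪ {c})* has a natural density, equal to Σ_{w ∈ L} |B|^{−(|w|+1)} where B = A ∪ {c}; moreover L' is REG-measurable with measure equal to this value. -/

import Mathlib

open Filter Topology

/-- Number of words of `L` of length `n`. -/
noncomputable def wordCount {A : Type*} (L : Set (List A)) (n : ℕ) : ℕ :=
  Nat.card {w : List A // w ∈ L ∧ w.length = n}

/-- `L` has natural density `α`. -/
def HasNatDensity {A : Type*} [Fintype A] (L : Set (List A)) (α : ℝ) : Prop :=
  Tendsto (fun n : ℕ => (wordCount L n : ℝ) / (Fintype.card A : ℝ) ^ n) atTop (nhds α)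

/-- `L` has (Cesàro) density `α`. -/
def HasCesaroDensity {A : Type*} [Fintype A] (L : Set (List A)) (α : ℝ) : Prop :=
  Tendsto (fun n : ℕ =>
      (∑ k ∈ Finset.range n, (wordCount L k : ℝ) / (Fintype.card A : ℝ) ^ k) / n)
    atTop (nhds α)

/-- `L` is a regular language (accepted by a DFA with finitely many states). -/
def IsRegularLang {A : Type*} (L : Set (List A)) : Prop :=
  ∃ (σ : Type) (_ : Fintype σ) (M : DFA A σ), ∀ w, w ∈ M.accepts ↔ w ∈ L

/-- The suffix extension of `L ⊆ A*` by a fresh letter `c` (modelled as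
`none : Option A`): `L' = {u c v : u ∈ L, v ∈ B*}` over `B = A ∪ {c}`. -/
def suffixExt {A : Type*} (L : Set (List A)) : Set (List (Option A)) :=
  {w | ∃ u v, u ∈ L ∧ w = u.map some ++ none :: v}

section Aux
variable {A : Type*}

lemma decomp_inj {u u' : List A} {v v' : List (Option A)}
    (h : u.map some ++ none :: v = u'.map some ++ none :: v') : u = u' ∧ v = v' := by
  induction u generalizing u' with
  | nil =>
    cases u' with
    | nil => simpa using h
    | cons b s => simp at h
  | cons a t ih =>
    cases u' with
    | nil => simp at h
    | cons b s =>
      simp only [List.map_cons, List.cons_append, List.cons.injEq, Option.some.injEq] at h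
      obtain ⟨rfl, h2⟩ := h
      obtain ⟨rfl, rfl⟩ := ih h2
      exact ⟨rfl, rfl⟩

instance lenFinite [Fintype A] (n : ℕ) : Finite {w : List A // w.length = n} :=
  inferInstanceAs (Finite (List.Vector A n))

instance subFinite [Fintype A] (K : Set (List A)) (n : ℕ) :
    Finite {w : List A // w ∈ K ∧ w.length = n} := by
  apply Finite.of_injective (fun x => (⟨x.1, x.2.2⟩ : {w : List A // w.length = n}))
  intro x y h
  simpa [Subtype.ext_iff] using h

lemma card_len (A : Type*) [Fintype A] (n : ℕ) :
    Nat.card {w : List A // w.length = n} = Fintype.card A ^ n := by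
  have : Nat.card (List.Vector A n) = Fintype.card A ^ n := by
    rw [Nat.card_eq_fintype_card, card_vector]
  exact this

lemma wordCount_le [Fintype A] (L : Set (List A)) (n : ℕ) :
    wordCount L n ≤ Fintype.card A ^ n := by
  rw [wordCount, ← card_len A n]
  exact Nat.card_le_card_of_injective
    (fun x => (⟨x.1, x.2.2⟩ : {w : List A // w.length = n}))
    (fun x y h => by simpa [Subtype.ext_iff] using h)

lemma wordCount_mono [Fintype A] {K K' : Set (List A)} (h : K ⊆ K') (n : ℕ) :
    wordCount K n ≤ wordCount K' n :=
  Nat.card_le_card_of_injective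
    (fun x => (⟨x.1, h x.2.1, x.2.2⟩ : {w : List A // w ∈ K' ∧ w.length = n}))
    (fun x y hxy => by simpa [Subtype.ext_iff] using hxy)

end Aux


section Count
variable {A : Type*} [Fintype A]

lemma count_suffixExt (L : Set (List A)) (n : ℕ) :
    wordCount (suffixExt L) n
      = ∑ m ∈ Finset.range n, wordCount L m * (Fintype.card (Option A)) ^ (n - 1 - m) := by
  classical
  set T := fun m : ℕ =>
    ({u : List A // u ∈ L ∧ u.length = m} × {v : List (Option A) // v.length = n - 1 - m})
  have hg : Function.Bijective
      (fun x : Σ m : Fin n, T m =>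
        (⟨x.2.1.1.map some ++ none :: x.2.2.1,
          ⟨x.2.1.1, x.2.2.1, x.2.1.2.1, rfl⟩, by
            have h1 := x.2.1.2.2
            have h2 := x.2.2.2
            have h3 := x.1.isLt
            simp only [List.length_append, List.length_map, List.length_cons, h1, h2]
            omega⟩ :
          {w : List (Option A) // w ∈ suffixExt L ∧ w.length = n})) := by
    constructor
    · rintro ⟨⟨m, hm⟩, ⟨u, hu⟩, ⟨v, hv⟩⟩ ⟨⟨m', hm'⟩, ⟨u', hu'⟩, ⟨v', hv'⟩⟩ h
      simp only [Subtype.mk.injEq] at h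
      obtain ⟨rfl, rfl⟩ := decomp_inj h
      have h1 : u.length = m := hu.2
      have h2 : u.length = m' := hu'.2
      have : m = m' := by omega
      subst this
      rfl
    · rintro ⟨w, ⟨u, v, hu, rfl⟩, hlen⟩
      simp only [List.length_append, List.length_map, List.length_cons] at hlen
      refine ⟨⟨⟨u.length, by omega⟩, ⟨u, hu, rfl⟩, ⟨v, ?_⟩⟩, rfl⟩
      show v.length = n - 1 - u.length
      omega
  have hcard : wordCount (suffixExt L) n = Nat.card (Σ m : Fin n, T m) :=
    (Nat.card_congr (Equiv.ofBijective _ hg)).symm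
  letI : ∀ m : ℕ, Fintype {u : List A // u ∈ L ∧ u.length = m} :=
    fun m => Fintype.ofFinite _
  letI : ∀ m : ℕ, Fintype {v : List (Option A) // v.length = m} :=
    fun m => Fintype.ofFinite _
  rw [hcard, Nat.card_eq_fintype_card, Fintype.card_sigma]
  rw [← Fin.sum_univ_eq_sum_range
    (fun m => wordCount L m * (Fintype.card (Option A)) ^ (n - 1 - m)) n]
  refine Finset.sum_congr rfl fun m _ => ?_
  rw [Fintype.card_prod]
  congr 1
  · rw [wordCount, Nat.card_eq_fintype_card]
  · rw [← Nat.card_eq_fintype_card, card_len]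

end Count

section Sum
variable {A : Type*} [Fintype A]

lemma kpos : (0:ℝ) < (Fintype.card (Option A) : ℝ) := by
  exact_mod_cast Fintype.card_pos

lemma key_sum (L : Set (List A)) :
    Summable (fun m : ℕ =>
        (wordCount L m : ℝ) * ((Fintype.card (Option A) : ℝ))⁻¹ ^ (m + 1)) ∧
    Summable (fun w : L =>
        ((Fintype.card (Option A) : ℝ))⁻¹ ^ ((w : List A).length + 1)) ∧
    (∑' w : L, ((Fintype.card (Option A) : ℝ))⁻¹ ^ ((w : List A).length + 1)
      = ∑' m : ℕ, (wordCount L m : ℝ) * ((Fintype.card (Option A) : ℝ))⁻¹ ^ (m + 1)) := by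
  classical
  set k : ℝ := (Fintype.card (Option A) : ℝ) with hk
  have hk0 : (0:ℝ) < k := kpos
  set a : ℝ := (Fintype.card A : ℝ) with ha
  have hka : k = a + 1 := by rw [hk, ha, Fintype.card_option]; push_cast; ring
  have ha0 : (0:ℝ) ≤ a := by positivity
  have hr0 : (0:ℝ) ≤ a * k⁻¹ := by positivity
  have hr1 : a * k⁻¹ < 1 := by
    rw [hka]
    rw [mul_inv_lt_iff₀ (by linarith)]
    linarith
  -- summability of the ℕ-indexed series
  have hgsum : Summable (fun m : ℕ => (wordCount L m : ℝ) * k⁻¹ ^ (m + 1)) := by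
    apply Summable.of_nonneg_of_le (f := fun m : ℕ => (a * k⁻¹) ^ m)
    · intro m; positivity
    · intro m
      have h1 : (wordCount L m : ℝ) ≤ a ^ m := by
        rw [ha]; exact_mod_cast wordCount_le L m
      have h2 : k⁻¹ ^ (m+1) = k⁻¹ * k⁻¹ ^ m := by ring
      have h3 : k⁻¹ ≤ 1 := by
        rw [inv_le_one_iff₀]; right; rw [hka]; linarith
      calc (wordCount L m : ℝ) * k⁻¹ ^ (m + 1)
          ≤ a ^ m * (k⁻¹ * k⁻¹ ^ m) := by
            rw [← h2]
            apply mul_le_mul_of_nonneg_right h1 (by positivity)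
        _ ≤ a ^ m * (1 * k⁻¹ ^ m) := by
            apply mul_le_mul_of_nonneg_left _ (by positivity)
            apply mul_le_mul_of_nonneg_right h3 (by positivity)
        _ = (a * k⁻¹) ^ m := by rw [mul_pow]; ring
    · exact summable_geometric_of_lt_one hr0 hr1
  -- the fiber equivalence
  let e : L ≃ Σ m : ℕ, {u : List A // u ∈ L ∧ u.length = m} :=
    { toFun := fun w => ⟨(w : List A).length, ⟨(w : List A), w.2, rfl⟩⟩
      invFun := fun x => ⟨x.2.1, x.2.2.1⟩
      left_inv := fun w => rfl
      right_inv := by rintro ⟨m, ⟨u, hu, rfl⟩⟩; rfl }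
  set F : (Σ m : ℕ, {u : List A // u ∈ L ∧ u.length = m}) → ℝ :=
    fun x => k⁻¹ ^ (x.1 + 1) with hF
  letI : ∀ m : ℕ, Fintype {u : List A // u ∈ L ∧ u.length = m} :=
    fun m => Fintype.ofFinite _
  have hinner : ∀ m : ℕ, ∑' u : {u : List A // u ∈ L ∧ u.length = m}, F ⟨m, u⟩
      = (wordCount L m : ℝ) * k⁻¹ ^ (m + 1) := by
    intro m
    have hc : ∀ u : {u : List A // u ∈ L ∧ u.length = m},
        F ⟨m, u⟩ = k⁻¹ ^ (m + 1) := fun _ => rfl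
    rw [tsum_congr hc, tsum_const, nsmul_eq_mul, wordCount]
  have hFsum : Summable F := by
    apply (summable_sigma_of_nonneg ?_).mpr
    · constructor
      · intro m
        exact (hasSum_fintype _).summable
      · apply Summable.congr hgsum
        intro m
        exact (hinner m).symm
    · intro x; positivity
  have hfF : ∀ w : L, k⁻¹ ^ ((w : List A).length + 1) = F (e w) := fun w => rfl
  refine ⟨hgsum, ?_, ?_⟩
  · rw [show (fun w : L => k⁻¹ ^ ((w : List A).length + 1)) = F ∘ e from funext hfF]
    exact hFsum.comp_injective e.injective
  · calc ∑' w : L, k⁻¹ ^ ((w : List A).length + 1)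
        = ∑' w : L, F (e w) := tsum_congr hfF
      _ = ∑' x, F x := e.tsum_eq F
      _ = ∑' m : ℕ, ∑' u : {u : List A // u ∈ L ∧ u.length = m}, F ⟨m, u⟩ :=
          Summable.tsum_sigma hFsum
      _ = ∑' m : ℕ, (wordCount L m : ℝ) * k⁻¹ ^ (m + 1) := tsum_congr hinner

end Sum



section Density
variable {A : Type*} [Fintype A]

lemma hasNatDensity_suffixExt (L : Set (List A)) :
    HasNatDensity (suffixExt L)
      (∑' w : L, ((Fintype.card (Option A) : ℝ))⁻¹ ^ ((w : List A).length + 1)) := by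
  obtain ⟨hgsum, -, heq⟩ := key_sum L
  rw [HasNatDensity, heq]
  set k : ℝ := (Fintype.card (Option A) : ℝ) with hk
  have hk0 : (0:ℝ) < k := kpos
  apply Tendsto.congr _ hgsum.hasSum.tendsto_sum_nat
  intro n
  rw [count_suffixExt]
  push_cast
  rw [Finset.sum_div]
  refine Finset.sum_congr rfl fun m hm => ?_
  rw [Finset.mem_range] at hm
  have hsplit : k ^ n = k ^ (n - 1 - m) * k ^ (m + 1) := by
    rw [← pow_add]
    congr 1
    omega
  rw [hsplit, div_eq_mul_inv, mul_inv, mul_assoc]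
  congr 1
  rw [← mul_assoc, inv_pow]
  rw [mul_inv_cancel₀ (by positivity), one_mul]

lemma count_compl (K : Set (List A)) (n : ℕ) :
    wordCount K n + wordCount Kᶜ n = Fintype.card A ^ n := by
  classical
  rw [wordCount, wordCount, ← card_len A n, ← Nat.card_sum]
  apply Nat.card_congr
  refine Equiv.trans (Equiv.sumCongr ?_ ?_) (Equiv.sumCompl (fun x : {w : List A // w.length = n} => x.1 ∈ K))
  · exact { toFun := fun w => ⟨⟨w.1, w.2.2⟩, w.2.1⟩
            invFun := fun x => ⟨x.1.1, x.2, x.1.2⟩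
            left_inv := fun w => rfl
            right_inv := fun x => rfl }
  · exact { toFun := fun w => ⟨⟨w.1, w.2.2⟩, w.2.1⟩
            invFun := fun x => ⟨x.1.1, x.2, x.1.2⟩
            left_inv := fun w => rfl
            right_inv := fun x => rfl }

lemma hasNatDensity_compl {K : Set (List A)} {α : ℝ}
    (hA : 0 < Fintype.card A) (h : HasNatDensity K α) :
    HasNatDensity Kᶜ (1 - α) := by
  rw [HasNatDensity]
  apply Tendsto.congr _ (Tendsto.sub tendsto_const_nhds h)
  intro n
  have hc := count_compl K n
  have hk0 : (0:ℝ) < (Fintype.card A : ℝ) ^ n := by positivity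
  field_simp
  have : (wordCount Kᶜ n : ℝ) = (Fintype.card A : ℝ) ^ n - (wordCount K n : ℝ) := by
    have : (wordCount K n : ℝ) + (wordCount Kᶜ n : ℝ) = (Fintype.card A : ℝ) ^ n := by
      exact_mod_cast congrArg (Nat.cast : ℕ → ℝ) hc
    linarith
  linarith

lemma hasCesaro_of_hasNat {K : Set (List A)} {α : ℝ} (h : HasNatDensity K α) :
    HasCesaroDensity K α := by
  rw [HasCesaroDensity]
  apply Tendsto.congr _ (Filter.Tendsto.cesaro h)
  intro n
  exact (div_eq_inv_mul _ _).symm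

lemma cesaro_mono {K K' : Set (List A)} {β β' : ℝ} (hsub : K ⊆ K')
    (h : HasCesaroDensity K β) (h' : HasCesaroDensity K' β') : β ≤ β' := by
  refine le_of_tendsto_of_tendsto' h h' fun n => ?_
  rw [div_eq_mul_inv, div_eq_mul_inv]
  apply mul_le_mul_of_nonneg_right _ (by positivity)
  apply Finset.sum_le_sum
  intro m _
  rw [div_eq_mul_inv, div_eq_mul_inv]
  apply mul_le_mul_of_nonneg_right _ (by positivity)
  exact_mod_cast wordCount_mono hsub m

end Density


section Reg
variable {α : Type*}

def prefixDFA [DecidableEq α] (p : List α) : DFA α (Option (Fin (p.length + 1))) where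
  step s a :=
    match s with
    | none => none
    | some i =>
      if h : (i : ℕ) < p.length then
        (if a = p.get ⟨i, h⟩ then some ⟨(i : ℕ) + 1, by omega⟩ else none)
      else some i
  start := some ⟨0, Nat.succ_pos _⟩
  accept := {some ⟨p.length, Nat.lt_succ_self _⟩}

lemma prefixDFA_none [DecidableEq α] (p : List α) (w : List α) :
    (prefixDFA p).evalFrom none w = none := by
  induction w with
  | nil => rfl
  | cons a w ih => exact ih

lemma prefixDFA_eval [DecidableEq α] (p : List α) (w : List α) :
    ∀ i : Fin (p.length + 1),
      ((prefixDFA p).evalFrom (some i) w ∈ (prefixDFA p).accept ↔ p.drop i <+: w) := by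
  induction w with
  | nil =>
    intro i
    show some i ∈ ({some ⟨p.length, _⟩} : Set _) ↔ _
    rw [Set.mem_singleton_iff]
    constructor
    · intro h
      have : (i : ℕ) = p.length := by
        have := congrArg (fun s => Option.getD (Option.map Fin.val s) 0) h
        simpa using this
      rw [List.drop_eq_nil_iff.mpr (by omega)]
    · intro h
      rw [List.prefix_nil, List.drop_eq_nil_iff] at h
      have : (i : ℕ) = p.length := by omega
      congr 1
      exact Fin.ext this
  | cons a w ih =>
    intro i
    show (prefixDFA p).evalFrom ((prefixDFA p).step (some i) a) w ∈ _ ↔ _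
    by_cases h : (i : ℕ) < p.length
    · have hdrop : p.drop i = p.get ⟨i, h⟩ :: p.drop ((i : ℕ) + 1) := by
        rw [List.drop_eq_getElem_cons h]
        rfl
      by_cases ha : a = p.get ⟨i, h⟩
      · have hstep : (prefixDFA p).step (some i) a = some ⟨(i : ℕ) + 1, by omega⟩ := by
          simp [prefixDFA, h, ha]
        rw [hstep, ih ⟨(i : ℕ) + 1, by omega⟩, hdrop, List.cons_prefix_cons]
        simp [ha]
      · have hstep : (prefixDFA p).step (some i) a = none := by
          have ha' : ¬ a = p[(i : ℕ)]'h := ha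
          simp [prefixDFA, h, ha']
        rw [hstep, prefixDFA_none, hdrop, List.cons_prefix_cons]
        constructor
        · intro hacc
          exact absurd hacc (by simp [prefixDFA])
        · rintro ⟨h1, -⟩
          exact absurd h1.symm ha
    · have hstep : (prefixDFA p).step (some i) a = some i := by
        simp [prefixDFA, h]
      have hdrop : p.drop i = [] := List.drop_eq_nil_iff.mpr (by omega)
      rw [hstep, ih i, hdrop]
      simp
  
lemma isRegular_prefix [DecidableEq α] (p : List α) :
    IsRegularLang {w : List α | p <+: w} := by
  refine ⟨Option (Fin (p.length + 1)), inferInstance, prefixDFA p, fun w => ?_⟩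
  have := prefixDFA_eval p w ⟨0, Nat.succ_pos _⟩
  simpa [DFA.mem_accepts, DFA.eval, prefixDFA] using this

lemma isRegular_empty : IsRegularLang (∅ : Set (List α)) := by
  refine ⟨Unit, inferInstance, ⟨fun _ _ => (), (), ∅⟩, fun w => ?_⟩
  simp [DFA.mem_accepts]

lemma isRegular_compl {K : Set (List α)} (h : IsRegularLang K) : IsRegularLang Kᶜ := by
  obtain ⟨σ, hσ, M, hM⟩ := h
  refine ⟨σ, hσ, ⟨M.step, M.start, M.acceptᶜ⟩, fun w => ?_⟩
  rw [DFA.mem_accepts]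
  have he : ({ step := M.step, start := M.start, accept := M.acceptᶜ } : DFA α σ).eval w
      = M.eval w := rfl
  show ¬ _ ∈ M.accept ↔ _
  rw [he, ← DFA.mem_accepts, hM]
  rfl

lemma isRegular_union {K K' : Set (List α)} (h : IsRegularLang K) (h' : IsRegularLang K') :
    IsRegularLang (K ∪ K') := by
  obtain ⟨σ, hσ, M, hM⟩ := h
  obtain ⟨σ', hσ', M', hM'⟩ := h'
  refine ⟨σ × σ', inferInstance,
    ⟨fun s a => (M.step s.1 a, M'.step s.2 a), (M.start, M'.start),
      {s | s.1 ∈ M.accept ∨ s.2 ∈ M'.accept}⟩, fun w => ?_⟩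
  have key : ∀ (w : List α) (s : σ) (s' : σ'),
      (DFA.mk (fun (s : σ × σ') a => (M.step s.1 a, M'.step s.2 a)) (M.start, M'.start)
          {s | s.1 ∈ M.accept ∨ s.2 ∈ M'.accept}).evalFrom (s, s') w
        = (M.evalFrom s w, M'.evalFrom s' w) := by
    intro w
    induction w with
    | nil => intro s s'; rfl
    | cons a w ih => intro s s'; exact ih (M.step s a) (M'.step s' a)
  rw [DFA.mem_accepts]
  show _ ∈ _ ↔ _
  rw [show (DFA.mk (fun (s : σ × σ') a => (M.step s.1 a, M'.step s.2 a)) (M.start, M'.start)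
      {s | s.1 ∈ M.accept ∨ s.2 ∈ M'.accept}).eval w
      = (M.eval w, M'.eval w) from key w M.start M'.start]
  show M.eval w ∈ M.accept ∨ M'.eval w ∈ M'.accept ↔ _
  rw [← DFA.mem_accepts, ← DFA.mem_accepts, hM, hM']
  rfl

end Reg

section SuffixReg
variable {A : Type*}

lemma suffixExt_mono {L L' : Set (List A)} (h : L ⊆ L') : suffixExt L ⊆ suffixExt L' := by
  rintro w ⟨u, v, hu, rfl⟩
  exact ⟨u, v, h hu, rfl⟩

lemma suffixExt_union (L L' : Set (List A)) :
    suffixExt (L ∪ L') = suffixExt L ∪ suffixExt L' := by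
  ext w
  constructor
  · rintro ⟨u, v, hu | hu, rfl⟩
    · exact Or.inl ⟨u, v, hu, rfl⟩
    · exact Or.inr ⟨u, v, hu, rfl⟩
  · rintro (⟨u, v, hu, rfl⟩ | ⟨u, v, hu, rfl⟩)
    · exact ⟨u, v, Or.inl hu, rfl⟩
    · exact ⟨u, v, Or.inr hu, rfl⟩

lemma suffixExt_empty : suffixExt (∅ : Set (List A)) = ∅ := by
  ext w
  simp [suffixExt]

lemma suffixExt_singleton (u : List A) :
    suffixExt ({u} : Set (List A)) = {w | (u.map some ++ [none]) <+: w} := by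
  ext w
  constructor
  · rintro ⟨u', v, hu', rfl⟩
    rw [Set.mem_singleton_iff] at hu'
    subst hu'
    exact ⟨v, by simp⟩
  · rintro ⟨t, ht⟩
    exact ⟨u, t, rfl, by rw [← ht]; simp⟩

lemma isRegular_suffixExt_finset (F : Finset (List A)) :
    IsRegularLang (suffixExt (↑F : Set (List A))) := by
  classical
  induction F using Finset.induction with
  | empty =>
    rw [Finset.coe_empty, suffixExt_empty]
    exact isRegular_empty
  | @insert a F ha ih =>
    have : (↑(insert a F) : Set (List A)) = {a} ∪ ↑F := by
      rw [Finset.coe_insert, Set.insert_eq]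
    rw [this, suffixExt_union, suffixExt_singleton]
    exact isRegular_union (isRegular_prefix _) ih

lemma suffixExt_disjoint {L L' : Set (List A)} (h : ∀ u, u ∈ L → u ∉ L') :
    suffixExt L ⊆ (suffixExt L')ᶜ := by
  rintro w ⟨u, v, hu, rfl⟩ ⟨u', v', hu', heq⟩
  obtain ⟨rfl, rfl⟩ := decomp_inj heq
  exact h u hu hu'

end SuffixReg

section Total
variable {A : Type*} [Fintype A]

lemma wordCount_univ (n : ℕ) :
    wordCount (Set.univ : Set (List A)) n = Fintype.card A ^ n := by
  rw [wordCount, ← card_len A n]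
  exact Nat.card_congr (Equiv.subtypeEquivRight (by simp))

lemma total_sum :
    ∑' w : List A, ((Fintype.card (Option A) : ℝ))⁻¹ ^ (w.length + 1) = 1 := by
  obtain ⟨-, -, heq⟩ := key_sum (Set.univ : Set (List A))
  rw [← tsum_univ, heq]
  set k : ℝ := (Fintype.card (Option A) : ℝ) with hk
  have hk0 : (0:ℝ) < k := kpos
  set a : ℝ := (Fintype.card A : ℝ) with ha
  have hka : k = a + 1 := by rw [hk, ha, Fintype.card_option]; push_cast; ring
  have ha0 : (0:ℝ) ≤ a := by positivity
  have hr0 : (0:ℝ) ≤ a * k⁻¹ := by positivity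
  have hr1 : a * k⁻¹ < 1 := by
    rw [hka, mul_inv_lt_iff₀ (by linarith)]
    linarith
  have hterm : ∀ m : ℕ,
      (wordCount (Set.univ : Set (List A)) m : ℝ) * k⁻¹ ^ (m + 1)
        = k⁻¹ * (a * k⁻¹) ^ m := by
    intro m
    rw [wordCount_univ]
    push_cast
    rw [mul_pow, ← ha]
    ring
  rw [tsum_congr hterm, tsum_mul_left, tsum_geometric_of_lt_one hr0 hr1]
  have h1 : 1 - a * k⁻¹ = k⁻¹ := by
    rw [hka]
    field_simp
    ring
  rw [h1, inv_inv, inv_mul_cancel₀ (by positivity)]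

end Total

lemma cesaro_finset {A : Type*} [Fintype A] (F : Finset (List A)) :
    HasCesaroDensity (suffixExt (↑F : Set (List A)))
      (∑ w ∈ F, ((Fintype.card (Option A) : ℝ))⁻¹ ^ (w.length + 1)) := by
  have h := hasCesaro_of_hasNat (hasNatDensity_suffixExt (↑F : Set (List A)))
  have e : (∑' w : (↑F : Set (List A)),
        ((Fintype.card (Option A) : ℝ))⁻¹ ^ ((w : List A).length + 1))
      = ∑ w ∈ F, ((Fintype.card (Option A) : ℝ))⁻¹ ^ (w.length + 1) :=
    Finset.tsum_subtype' F (fun w => ((Fintype.card (Option A) : ℝ))⁻¹ ^ (w.length + 1))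
  rwa [e] at h

lemma cesaro_finset_compl {A : Type*} [Fintype A] (F : Finset (List A)) :
    HasCesaroDensity (suffixExt (↑F : Set (List A)))ᶜ
      (1 - ∑ w ∈ F, ((Fintype.card (Option A) : ℝ))⁻¹ ^ (w.length + 1)) := by
  have h := hasCesaro_of_hasNat
    (hasNatDensity_compl Fintype.card_pos (hasNatDensity_suffixExt (↑F : Set (List A))))
  have e : (∑' w : (↑F : Set (List A)),
        ((Fintype.card (Option A) : ℝ))⁻¹ ^ ((w : List A).length + 1))
      = ∑ w ∈ F, ((Fintype.card (Option A) : ℝ))⁻¹ ^ (w.length + 1) :=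
    Finset.tsum_subtype' F (fun w => ((Fintype.card (Option A) : ℝ))⁻¹ ^ (w.length + 1))
  rwa [e] at h


/-- The suffix extension of any language has a natural density, equal to
`Σ_{w ∈ L} |B|^{-(|w|+1)}`, and is `REG`-measurable with this measure. -/
theorem stmt15 {A : Type*} [Fintype A] (L : Set (List A)) :
    HasNatDensity (suffixExt L)
      (∑' w : L, ((Fintype.card (Option A) : ℝ))⁻¹ ^ ((w : List A).length + 1)) ∧
    IsLUB {α : ℝ | ∃ K : Set (List (Option A)), IsRegularLang K ∧ K ⊆ suffixExt L ∧
        HasCesaroDensity K α}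
      (∑' w : L, ((Fintype.card (Option A) : ℝ))⁻¹ ^ ((w : List A).length + 1)) ∧
    IsGLB {β : ℝ | ∃ M : Set (List (Option A)), IsRegularLang M ∧ suffixExt L ⊆ M ∧
        HasCesaroDensity M β}
      (∑' w : L, ((Fintype.card (Option A) : ℝ))⁻¹ ^ ((w : List A).length + 1)) := by
  classical
  obtain ⟨-, hfsumL, -⟩ := key_sum L
  obtain ⟨-, hfsumC, -⟩ := key_sum Lᶜ
  set S := ∑' w : L, ((Fintype.card (Option A) : ℝ))⁻¹ ^ ((w : List A).length + 1) with hS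
  have hnat := hasNatDensity_suffixExt L
  have hces : HasCesaroDensity (suffixExt L) S := hasCesaro_of_hasNat hnat
  refine ⟨hnat, ⟨?_, ?_⟩, ?_, ?_⟩
  · -- upper bound for subset densities
    rintro α ⟨K, -, hsub, hK⟩
    exact cesaro_mono hsub hK hces
  · -- least upper bound
    intro b hb
    have hlub := isLUB_hasSum
      (f := fun w : L => ((Fintype.card (Option A) : ℝ))⁻¹ ^ ((w : List A).length + 1))
      (fun w => by positivity) hfsumL.hasSum
    apply hlub.2
    rintro x ⟨s, rfl⟩
    apply hb
    set F := s.image Subtype.val with hF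
    have hFL : (↑F : Set (List A)) ⊆ L := by
      intro x hx
      simp only [hF, Finset.coe_image, Set.mem_image, Finset.mem_coe] at hx
      obtain ⟨⟨y, hy⟩, -, rfl⟩ := hx
      exact hy
    have hsum : ∑ w ∈ F, ((Fintype.card (Option A) : ℝ))⁻¹ ^ (w.length + 1)
        = ∑ x ∈ s, ((Fintype.card (Option A) : ℝ))⁻¹ ^ ((x : List A).length + 1) :=
      Finset.sum_image fun x _ y _ h => Subtype.ext h
    refine ⟨suffixExt (↑F : Set (List A)), isRegular_suffixExt_finset F,
      suffixExt_mono hFL, ?_⟩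
    have := cesaro_finset F
    rwa [hsum] at this
  · -- lower bound for superset densities
    rintro β ⟨M, -, hsup, hM⟩
    exact cesaro_mono hsup hces hM
  · -- greatest lower bound
    intro b hb
    set S' := ∑' w : ↥(Lᶜ), ((Fintype.card (Option A) : ℝ))⁻¹ ^ ((w : List A).length + 1)
      with hS'
    have hsplit : S + S' = 1 := by
      have h := Summable.tsum_add_tsum_compl
        (f := fun w : List A => ((Fintype.card (Option A) : ℝ))⁻¹ ^ (w.length + 1))
        hfsumL hfsumC
      rw [total_sum] at h
      exact h
    have hlubC := isLUB_hasSum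
      (f := fun w : ↥(Lᶜ) => ((Fintype.card (Option A) : ℝ))⁻¹ ^ ((w : List A).length + 1))
      (fun w => by positivity) hfsumC.hasSum
    have hS'le : S' ≤ 1 - b := by
      apply hlubC.2
      rintro x ⟨s, rfl⟩
      set F := s.image Subtype.val with hF
      have hFLc : ∀ u, u ∈ L → u ∉ (↑F : Set (List A)) := by
        intro u hu hmem
        simp only [hF, Finset.coe_image, Set.mem_image, Finset.mem_coe] at hmem
        obtain ⟨⟨y, hy⟩, -, rfl⟩ := hmem
        exact hy hu
      have hsum : ∑ w ∈ F, ((Fintype.card (Option A) : ℝ))⁻¹ ^ (w.length + 1)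
          = ∑ x ∈ s, ((Fintype.card (Option A) : ℝ))⁻¹ ^ ((x : List A).length + 1) :=
        Finset.sum_image fun x _ y _ h => Subtype.ext h
      have hmem : (1 - ∑ w ∈ F, ((Fintype.card (Option A) : ℝ))⁻¹ ^ (w.length + 1)) ∈
          {β : ℝ | ∃ M : Set (List (Option A)), IsRegularLang M ∧ suffixExt L ⊆ M ∧
            HasCesaroDensity M β} := by
        refine ⟨(suffixExt (↑F : Set (List A)))ᶜ,
          isRegular_compl (isRegular_suffixExt_finset F),
          suffixExt_disjoint hFLc, cesaro_finset_compl F⟩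
      have hble := hb hmem
      rw [hsum] at hble
      linarith
    linarith
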